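/- Let f: ℝ → ℝ be Lipschitz with constant L. Then the map X ↦ f(X), defined via the functional calculus on real symmetric (or Hermitian) N×N matrices, is Lipschitz with constant L with respect to the Hilbert–Schmidt norm: ‖f(X) - f(Y)‖_HS ≤ L·‖X - Y‖_HS. Consequently, each matrix entry f(X)_{ij} is a Lipschitz function of the entries of X (in Hilbert–Schmidt norm) with the same constant L. -/

import Mathlib

open Matrix


noncomputable def hsSq {N : ℕ} (A : Matrix (Fin N) (Fin N) ℂ) : ℝ :=
  ∑ i, ∑ j, ‖A i j‖ ^ 2

lemma hsSq_eq_trace {N : ℕ} (A : Matrix (Fin N) (Fin N) ℂ) :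
    (hsSq A : ℂ) = trace (Aᴴ * A) := by
  simp only [hsSq, trace, diag, Matrix.mul_apply, conjTranspose_apply]
  push_cast
  rw [Finset.sum_comm]
  refine Finset.sum_congr rfl fun i _ => Finset.sum_congr rfl fun j _ => ?_
  rw [← Complex.conj_mul' (A j i)]
  rfl

lemma hsSq_conj {N : ℕ} (U V A : Matrix (Fin N) (Fin N) ℂ)
    (hU : U ∈ unitaryGroup (Fin N) ℂ) (hV : V ∈ unitaryGroup (Fin N) ℂ) :
    hsSq (Uᴴ * A * V) = hsSq A := by
  have hU1 : U * Uᴴ = 1 := by rw [← star_eq_conjTranspose]; exact mem_unitaryGroup_iff.mp hU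
  have hV1 : V * Vᴴ = 1 := by rw [← star_eq_conjTranspose]; exact mem_unitaryGroup_iff.mp hV
  have h : ((hsSq (Uᴴ * A * V) : ℂ)) = (hsSq A : ℂ) := by
    rw [hsSq_eq_trace, hsSq_eq_trace]
    have : (Uᴴ * A * V)ᴴ * (Uᴴ * A * V) = Vᴴ * (Aᴴ * A) * V := by
      simp only [conjTranspose_mul, conjTranspose_conjTranspose]
      calc Vᴴ * (Aᴴ * U) * (Uᴴ * A * V) = Vᴴ * Aᴴ * (U * Uᴴ) * (A * V) := by
            simp only [mul_assoc]
        _ = Vᴴ * (Aᴴ * A) * V := by rw [hU1, mul_one]; simp only [mul_assoc]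
    rw [this, trace_mul_comm]
    rw [show V * (Vᴴ * (Aᴴ * A)) = (V * Vᴴ) * (Aᴴ * A) by simp [mul_assoc], hV1, one_mul]
  exact_mod_cast h


/-- Hilbert–Schmidt (Frobenius) norm of a complex matrix. -/
noncomputable def hsNorm {N : ℕ} (A : Matrix (Fin N) (Fin N) ℂ) : ℝ :=
  Real.sqrt (∑ i, ∑ j, ‖A i j‖ ^ 2)

lemma hsNorm_eq {N : ℕ} (A : Matrix (Fin N) (Fin N) ℂ) : hsNorm A = Real.sqrt (hsSq A) := rfl

lemma hsSq_nonneg {N : ℕ} (A : Matrix (Fin N) (Fin N) ℂ) : 0 ≤ hsSq A := by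
  apply Finset.sum_nonneg; intros; apply Finset.sum_nonneg; intros; positivity

lemma entry_le_hsNorm {N : ℕ} (A : Matrix (Fin N) (Fin N) ℂ) (i j : Fin N) :
    ‖A i j‖ ≤ hsNorm A := by
  rw [hsNorm_eq, ← Real.sqrt_sq (norm_nonneg (A i j))]
  apply Real.sqrt_le_sqrt
  calc ‖A i j‖ ^ 2 ≤ ∑ l, ‖A i l‖ ^ 2 := by
        apply Finset.single_le_sum (f := fun l => ‖A i l‖ ^ 2) (fun _ _ => by positivity)
          (Finset.mem_univ j)
    _ ≤ hsSq A :=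
        Finset.single_le_sum (f := fun k => ∑ l, ‖A k l‖ ^ 2)
          (fun _ _ => Finset.sum_nonneg fun _ _ => by positivity) (Finset.mem_univ i)


/-- If `f : ℝ → ℝ` is Lipschitz with constant `L`, then the functional calculus
`X ↦ f(X)` on Hermitian matrices is Lipschitz with constant `L` in Hilbert–Schmidt norm;
consequently each entry of `f(X) - f(Y)` is bounded by `L·‖X - Y‖_HS`. -/
theorem lipschitz_functional_calculus (N : ℕ) (f : ℝ → ℝ) (L : ℝ)
    (hf : ∀ x y : ℝ, |f x - f y| ≤ L * |x - y|)
    (X Y : Matrix (Fin N) (Fin N) ℂ) (hX : X.IsHermitian) (hY : Y.IsHermitian) :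
    hsNorm (hX.cfc f - hY.cfc f) ≤ L * hsNorm (X - Y) ∧
    ∀ i j : Fin N, ‖(hX.cfc f - hY.cfc f) i j‖ ≤ L * hsNorm (X - Y) := by
  have hL : 0 ≤ L := by
    have h1 := hf 0 1
    have h2 := abs_nonneg (f 0 - f 1)
    simp at h1
    linarith
  set U := (IsHermitian.eigenvectorUnitary hX : Matrix (Fin N) (Fin N) ℂ) with hUdef
  set V := (IsHermitian.eigenvectorUnitary hY : Matrix (Fin N) (Fin N) ℂ) with hVdef
  have hUm : U ∈ unitaryGroup (Fin N) ℂ := (IsHermitian.eigenvectorUnitary hX).2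
  have hVm : V ∈ unitaryGroup (Fin N) ℂ := (IsHermitian.eigenvectorUnitary hY).2
  have hU1 : Uᴴ * U = 1 := by rw [← star_eq_conjTranspose]; exact mem_unitaryGroup_iff'.mp hUm
  have hV1 : Vᴴ * V = 1 := by rw [← star_eq_conjTranspose]; exact mem_unitaryGroup_iff'.mp hVm
  set W := Uᴴ * V with hWdef
  -- key conjugation identity for pairs of spectral decompositions
  have key : ∀ d e : Fin N → ℂ,
      Uᴴ * (U * diagonal d * Uᴴ - V * diagonal e * Vᴴ) * V
        = diagonal d * W - W * diagonal e := by
    intro d e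
    have h1 : Uᴴ * (U * diagonal d * Uᴴ) * V = diagonal d * W := by
      calc Uᴴ * (U * diagonal d * Uᴴ) * V = (Uᴴ * U) * diagonal d * (Uᴴ * V) := by
            simp only [mul_assoc]
        _ = diagonal d * W := by rw [hU1, one_mul]
    have h2 : Uᴴ * (V * diagonal e * Vᴴ) * V = W * diagonal e := by
      calc Uᴴ * (V * diagonal e * Vᴴ) * V = (Uᴴ * V) * diagonal e * (Vᴴ * V) := by
            simp only [mul_assoc]
        _ = W * diagonal e := by rw [hV1, mul_one]
    rw [mul_sub, sub_mul, h1, h2]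
  set lam := hX.eigenvalues
  set mu := hY.eigenvalues
  -- hsSq of the conjugated differences
  have hfXY : hsSq (hX.cfc f - hY.cfc f)
      = hsSq (diagonal ((↑) ∘ f ∘ lam) * W - W * diagonal ((↑) ∘ f ∘ mu)) := by
    have e1 : hX.cfc f = U * diagonal ((↑) ∘ f ∘ lam) * Uᴴ := by
      rw [Matrix.IsHermitian.cfc, Unitary.conjStarAlgAut_apply, star_eq_conjTranspose]; rfl
    have e2 : hY.cfc f = V * diagonal ((↑) ∘ f ∘ mu) * Vᴴ := by
      rw [Matrix.IsHermitian.cfc, Unitary.conjStarAlgAut_apply, star_eq_conjTranspose]; rfl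
    rw [e1, e2, ← key, hsSq_conj _ _ _ hUm hVm]
  have hXY : hsSq (X - Y)
      = hsSq (diagonal ((↑) ∘ lam) * W - W * diagonal ((↑) ∘ mu)) := by
    have e1 : X = U * diagonal ((↑) ∘ lam) * Uᴴ := by
      rw [← star_eq_conjTranspose]; exact hX.spectral_theorem
    have e2 : Y = V * diagonal ((↑) ∘ mu) * Vᴴ := by
      rw [← star_eq_conjTranspose]; exact hY.spectral_theorem
    conv_lhs => rw [e1, e2]
    rw [← key, hsSq_conj _ _ _ hUm hVm]
  -- entrywise comparison
  have main : hsSq (hX.cfc f - hY.cfc f) ≤ L ^ 2 * hsSq (X - Y) := by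
    rw [hfXY, hXY]
    simp only [hsSq]
    rw [Finset.mul_sum]
    apply Finset.sum_le_sum
    intro i _
    rw [Finset.mul_sum]
    apply Finset.sum_le_sum
    intro j _
    simp only [Matrix.sub_apply, diagonal_mul, mul_diagonal, Function.comp_apply]
    have e1 : ∀ a b : ℝ, (↑a * W i j - W i j * ↑b : ℂ) = ((a - b : ℝ) : ℂ) * W i j := by
      intro a b; push_cast; ring
    rw [e1, e1, norm_mul, norm_mul, Complex.norm_real, Complex.norm_real]
    have h1 : ‖f (lam i) - f (mu j)‖ ≤ L * ‖lam i - mu j‖ := by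
      rw [Real.norm_eq_abs, Real.norm_eq_abs]; exact hf _ _
    have h2 := mul_self_le_mul_self (norm_nonneg (f (lam i) - f (mu j))) h1
    nlinarith [sq_nonneg (‖W i j‖), norm_nonneg (W i j), norm_nonneg (lam i - mu j)]
  refine ⟨?_, ?_⟩
  · rw [hsNorm_eq, hsNorm_eq]
    calc Real.sqrt (hsSq (hX.cfc f - hY.cfc f)) ≤ Real.sqrt (L ^ 2 * hsSq (X - Y)) :=
          Real.sqrt_le_sqrt main
      _ = L * Real.sqrt (hsSq (X - Y)) := by
          rw [Real.sqrt_mul (by positivity), Real.sqrt_sq hL]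
  · intro i j
    calc ‖(hX.cfc f - hY.cfc f) i j‖ ≤ hsNorm (hX.cfc f - hY.cfc f) := entry_le_hsNorm _ i j
      _ ≤ L * hsNorm (X - Y) := by
          rw [hsNorm_eq, hsNorm_eq]
          calc Real.sqrt (hsSq (hX.cfc f - hY.cfc f)) ≤ Real.sqrt (L ^ 2 * hsSq (X - Y)) :=
                Real.sqrt_le_sqrt main
            _ = L * Real.sqrt (hsSq (X - Y)) := by
                rw [Real.sqrt_mul (by positivity), Real.sqrt_sq hL]
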